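/- Let R be an integral domain and I a nonzero ideal of R of finite index. For every nonzero element x of the fraction field of R with xR ⊆ R, one has [R : xR]·[R : I] = [R : xI]. -/

import Mathlib

/-- Let `R` be an integral domain and `I` a nonzero ideal of finite index. For every nonzero
`x` in the fraction field of `R` with `x·R ⊆ R` (i.e. `x` is the image of some `y : R`),
one has `[R : xR]·[R : I] = [R : xI]`. -/
theorem stmt0 (R : Type*) [CommRing R] [IsDomain R] (I : Ideal R) (hI : I ≠ ⊥)
    (hfin : Finite (R ⧸ I)) (x : FractionRing R) (hx : x ≠ 0)
    (hxR : ∀ r : R, ∃ s : R, x * algebraMap R (FractionRing R) r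
      = algebraMap R (FractionRing R) s)
    (y : R) (hy : algebraMap R (FractionRing R) y = x) :
    Nat.card (R ⧸ Ideal.span {y}) * Nat.card (R ⧸ I) =
      Nat.card (R ⧸ Ideal.span {y} * I) := by
  have hy0 : y ≠ 0 := by
    rintro rfl; simp at hy; exact hx hy.symm
  set J : Ideal R := Ideal.span {y} with hJ
  set P : Ideal R := J * I with hP
  have hPJ : P ≤ J := Ideal.mul_le_left
  -- multiplication by y: R ≃ₗ[R] J
  have hspan : (Submodule.span R {y} : Submodule R R) = J := rfl
  let f : R ≃ₗ[R] (R ∙ y) := LinearEquiv.toSpanNonzeroSingleton R R y hy0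
  -- I maps onto the preimage of P in J
  have hmap : Submodule.map (f : R →ₗ[R] (R ∙ y)) I
      = LinearMap.ker (P.mkQ ∘ₗ (R ∙ y).subtype) := by
    ext ⟨z, hz⟩
    simp only [Submodule.mem_map, LinearMap.mem_ker, LinearMap.comp_apply,
      Submodule.subtype_apply, Submodule.Quotient.mk_eq_zero, Submodule.mkQ_apply]
    constructor
    · rintro ⟨r, hr, hfr⟩
      have : f r = ⟨z, hz⟩ := hfr
      have hz' : r • y = z := congrArg Subtype.val this
      have : z ∈ P := by
        rw [hP, hJ, Ideal.mem_span_singleton_mul]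
        exact ⟨r, hr, by rw [mul_comm]; simpa [smul_eq_mul] using hz'⟩
      exact this
    · intro hzP
      rw [hP, hJ, Ideal.mem_span_singleton_mul] at hzP
      obtain ⟨r, hr, hrz⟩ := hzP
      refine ⟨r, hr, ?_⟩
      apply Subtype.ext
      show r • y = z
      rw [smul_eq_mul, mul_comm]; exact hrz
  -- the three equivalences
  have e1 : ((R ⧸ P) ⧸ (Submodule.map P.mkQ J)) ≃ₗ[R] R ⧸ J :=
    Submodule.quotientQuotientEquivQuotient P J hPJ
  have e2 : ((R ∙ y) ⧸ LinearMap.ker (P.mkQ ∘ₗ (R ∙ y).subtype))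
      ≃ₗ[R] LinearMap.range (P.mkQ ∘ₗ (R ∙ y).subtype) :=
    (P.mkQ ∘ₗ (R ∙ y).subtype).quotKerEquivRange
  have hrange : LinearMap.range (P.mkQ ∘ₗ (R ∙ y).subtype) = Submodule.map P.mkQ J := by
    rw [LinearMap.range_comp, Submodule.range_subtype, hspan]
  have e3 : (R ⧸ I) ≃ₗ[R] ((R ∙ y) ⧸ LinearMap.ker (P.mkQ ∘ₗ (R ∙ y).subtype)) :=
    Submodule.Quotient.equiv I _ f hmap
  -- counting
  have key : Nat.card (R ⧸ P)
      = Nat.card ((R ⧸ P) ⧸ (Submodule.map P.mkQ J)) * Nat.card (Submodule.map P.mkQ J) :=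
    AddSubgroup.card_eq_card_quotient_mul_card_addSubgroup
      (Submodule.map P.mkQ J).toAddSubgroup
  have c1 : Nat.card ((R ⧸ P) ⧸ (Submodule.map P.mkQ J)) = Nat.card (R ⧸ J) :=
    Nat.card_congr e1.toEquiv
  have c2 : Nat.card (Submodule.map P.mkQ J) = Nat.card (R ⧸ I) := by
    rw [← hrange]
    exact Nat.card_congr (e3.trans e2).toEquiv.symm
  rw [key, c1, c2]
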